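/- Holley–Stroock perturbation lemma (measure-theoretic core): let μ be a probability measure, V a bounded measurable function, and μ̃ = Z^{−1}e^V μ with Z = ∫e^V dμ. If Ent_μ(f²) ≤ c·∫Γ dμ for some nonnegative measurable function Γ (the carré du champ of f) and constant c > 0, then Ent_{μ̃}(f²) ≤ c·e^{osc(V)}·∫Γ dμ̃, where osc(V) = sup V − inf V. -/

import Mathlib

open MeasureTheory Real

private lemma aux_nonneg {x t : ℝ} (hx : 0 ≤ x) (ht : 0 < t) :
    0 ≤ x * Real.log x - x * Real.log t + t - x := by
  rcases hx.eq_or_lt with h | h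
  · simp only [← h, zero_mul, sub_zero, zero_sub, neg_zero, zero_add, sub_zero]
    linarith
  · have h1 := Real.log_le_sub_one_of_pos (div_pos ht h)
    rw [Real.log_div ht.ne' h.ne'] at h1
    have h2 := mul_le_mul_of_nonneg_left h1 h.le
    rw [mul_sub, mul_sub, mul_div_cancel₀ _ h.ne'] at h2
    nlinarith

/-- Holley–Stroock perturbation lemma (measure-theoretic core). -/
theorem stmt_16 {Ω : Type*} [MeasurableSpace Ω] (μ : Measure Ω) [IsProbabilityMeasure μ]
    (V f Γ : Ω → ℝ) (hVmeas : Measurable V)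
    (hVbdd : BddAbove (Set.range V)) (hVbdd' : BddBelow (Set.range V))
    (c : ℝ) (hc : 0 < c) (hΓ : ∀ ω, 0 ≤ Γ ω)
    (μt : Measure Ω)
    (hμt : μt = (ENNReal.ofReal (∫ ω, Real.exp (V ω) ∂μ))⁻¹ •
      μ.withDensity (fun ω => ENNReal.ofReal (Real.exp (V ω))))
    (hf1 : Integrable (fun ω => f ω ^ 2) μ)
    (hf2 : Integrable (fun ω => f ω ^ 2 * Real.log (f ω ^ 2)) μ)
    (hf1' : Integrable (fun ω => f ω ^ 2) μt)
    (hf2' : Integrable (fun ω => f ω ^ 2 * Real.log (f ω ^ 2)) μt)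
    (hΓ1 : Integrable Γ μ) (hΓ1' : Integrable Γ μt)
    (hLS : (∫ ω, f ω ^ 2 * Real.log (f ω ^ 2) ∂μ)
        - (∫ ω, f ω ^ 2 ∂μ) * Real.log (∫ ω, f ω ^ 2 ∂μ) ≤ c * ∫ ω, Γ ω ∂μ) :
    (∫ ω, f ω ^ 2 * Real.log (f ω ^ 2) ∂μt)
        - (∫ ω, f ω ^ 2 ∂μt) * Real.log (∫ ω, f ω ^ 2 ∂μt) ≤
      c * Real.exp (sSup (Set.range V) - sInf (Set.range V)) * ∫ ω, Γ ω ∂μt := by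
  set M := sSup (Set.range V) with hMdef
  set m := sInf (Set.range V) with hmdef
  have hVle : ∀ ω, V ω ≤ M := fun ω => le_csSup hVbdd ⟨ω, rfl⟩
  have hVge : ∀ ω, m ≤ V ω := fun ω => csInf_le hVbdd' ⟨ω, rfl⟩
  set Z := ∫ ω, Real.exp (V ω) ∂μ with hZdef
  have hexpInt : Integrable (fun ω => Real.exp (V ω)) μ := by
    refine (integrable_const (Real.exp M)).mono' hVmeas.exp.aestronglyMeasurable ?_
    filter_upwards with ω
    rw [Real.norm_eq_abs, abs_of_pos (Real.exp_pos _)]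
    exact Real.exp_le_exp.2 (hVle ω)
  have hZge : Real.exp m ≤ Z := by
    have : ∫ (_ : Ω), Real.exp m ∂μ ≤ Z :=
      integral_mono (integrable_const _) hexpInt (fun ω => Real.exp_le_exp.2 (hVge ω))
    simpa using this
  have hZpos : 0 < Z := lt_of_lt_of_le (Real.exp_pos m) hZge
  -- transfer formula
  have hdmeas : Measurable (fun ω => Real.toNNReal (Real.exp (V ω))) :=
    (measurable_real_toNNReal.comp (Real.measurable_exp.comp hVmeas))
  have key : ∀ h : Ω → ℝ, ∫ ω, h ω ∂μt = Z⁻¹ * ∫ ω, Real.exp (V ω) * h ω ∂μ := by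
    intro h
    rw [hμt, integral_smul_measure]
    rw [show (fun ω => ENNReal.ofReal (Real.exp (V ω)))
        = (fun ω => ((Real.toNNReal (Real.exp (V ω)) : NNReal) : ENNReal)) from rfl]
    rw [integral_withDensity_eq_integral_smul hdmeas h]
    simp only [smul_eq_mul]
    congr 1
    · rw [ENNReal.toReal_inv, ENNReal.toReal_ofReal hZpos.le]
    · refine integral_congr_ae (Filter.Eventually.of_forall fun ω => ?_)
      simp [NNReal.smul_def, Real.coe_toNNReal _ (Real.exp_pos _).le]
  have hbdd : ∃ C, ∀ ω, ‖Real.exp (V ω)‖ ≤ C :=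
    ⟨Real.exp M, fun ω => by
      rw [Real.norm_eq_abs, abs_of_pos (Real.exp_pos _)]
      exact Real.exp_le_exp.2 (hVle ω)⟩
  have keyA : ∀ h : Ω → ℝ, (∀ ω, 0 ≤ h ω) → Integrable h μ →
      ∫ ω, h ω ∂μt ≤ (Real.exp M / Z) * ∫ ω, h ω ∂μ := by
    intro h hpos hint
    have h1 : Integrable (fun ω => Real.exp (V ω) * h ω) μ :=
      hint.bdd_mul hVmeas.exp.aestronglyMeasurable (Filter.Eventually.of_forall hbdd.choose_spec)
    have h2 : ∫ ω, Real.exp (V ω) * h ω ∂μ ≤ ∫ ω, Real.exp M * h ω ∂μ :=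
      integral_mono h1 (hint.const_mul _)
        (fun ω => mul_le_mul_of_nonneg_right (Real.exp_le_exp.2 (hVle ω)) (hpos ω))
    rw [integral_const_mul] at h2
    rw [key h]
    calc Z⁻¹ * ∫ ω, Real.exp (V ω) * h ω ∂μ
        ≤ Z⁻¹ * (Real.exp M * ∫ ω, h ω ∂μ) :=
          mul_le_mul_of_nonneg_left h2 (inv_nonneg.2 hZpos.le)
      _ = (Real.exp M / Z) * ∫ ω, h ω ∂μ := by ring
  have keyB : ∫ ω, Γ ω ∂μ ≤ (Z / Real.exp m) * ∫ ω, Γ ω ∂μt := by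
    have h1 : Integrable (fun ω => Real.exp (V ω) * Γ ω) μ :=
      hΓ1.bdd_mul hVmeas.exp.aestronglyMeasurable (Filter.Eventually.of_forall hbdd.choose_spec)
    have h2 : ∫ ω, Real.exp m * Γ ω ∂μ ≤ ∫ ω, Real.exp (V ω) * Γ ω ∂μ :=
      integral_mono (hΓ1.const_mul _) h1
        (fun ω => mul_le_mul_of_nonneg_right (Real.exp_le_exp.2 (hVge ω)) (hΓ ω))
    rw [integral_const_mul] at h2
    rw [key Γ]
    have heq : Z / Real.exp m * (Z⁻¹ * ∫ ω, Real.exp (V ω) * Γ ω ∂μ)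
        = (Real.exp m)⁻¹ * ∫ ω, Real.exp (V ω) * Γ ω ∂μ := by
      field_simp
    rw [heq, inv_mul_eq_div, le_div_iff₀ (Real.exp_pos m)]
    linarith
  -- μt is a probability measure
  have hprob : IsProbabilityMeasure μt := by
    constructor
    rw [hμt, Measure.smul_apply, withDensity_apply _ MeasurableSet.univ,
      setLIntegral_univ,
      ← ofReal_integral_eq_lintegral_ofReal hexpInt
        (Filter.Eventually.of_forall fun ω => (Real.exp_pos _).le),
      smul_eq_mul,
      ENNReal.inv_mul_cancel (ENNReal.ofReal_pos.2 hZpos).ne' ENNReal.ofReal_ne_top]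
  haveI := hprob
  set t := ∫ ω, f ω ^ 2 ∂μ with htdef
  have ht0 : 0 ≤ t := integral_nonneg fun ω => sq_nonneg _
  rcases ht0.eq_or_lt with ht | ht
  · -- degenerate case: ∫ f² dμ = 0
    have hzero : (fun ω => f ω ^ 2) =ᵐ[μ] 0 :=
      (integral_eq_zero_iff_of_nonneg (fun ω => sq_nonneg _) hf1).1 ht.symm
    have hac : μt ≪ μ := by
      rw [hμt]
      exact (withDensity_absolutelyContinuous μ _).smul_left _
    have hzero' : (fun ω => f ω ^ 2) =ᵐ[μt] 0 := hac.ae_le hzero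
    have e1 : ∫ ω, f ω ^ 2 ∂μt = 0 := by
      rw [integral_congr_ae hzero']; simp
    have e2 : ∫ ω, f ω ^ 2 * Real.log (f ω ^ 2) ∂μt = 0 := by
      rw [integral_congr_ae (μ := μt) (g := 0)
        (hzero'.mono fun ω hω => by simp [hω])]; simp
    rw [e1, e2]
    have : 0 ≤ ∫ ω, Γ ω ∂μt := integral_nonneg fun ω => hΓ ω
    simp only [zero_mul, sub_zero]
    positivity
  · -- main case
    set φ := fun ω => f ω ^ 2 * Real.log (f ω ^ 2) - f ω ^ 2 * Real.log t + t - f ω ^ 2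
      with hφdef
    have hφpos : ∀ ω, 0 ≤ φ ω := fun ω => aux_nonneg (sq_nonneg _) ht
    have hφint : Integrable φ μ :=
      (((hf2.sub (hf1.mul_const _)).add (integrable_const t)).sub hf1)
    have hφint' : Integrable φ μt :=
      (((hf2'.sub (hf1'.mul_const _)).add (integrable_const t)).sub hf1')
    have hsplit : ∀ (ν : Measure Ω), IsProbabilityMeasure ν →
        Integrable (fun ω => f ω ^ 2) ν →
        Integrable (fun ω => f ω ^ 2 * Real.log (f ω ^ 2)) ν →
        ∫ ω, φ ω ∂ν = (∫ ω, f ω ^ 2 * Real.log (f ω ^ 2) ∂ν)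
          - (∫ ω, f ω ^ 2 ∂ν) * Real.log t + t - ∫ ω, f ω ^ 2 ∂ν := by
      intro ν hν h1 h2
      haveI := hν
      have A1 : Integrable (fun ω => f ω ^ 2 * Real.log (f ω ^ 2)
          - f ω ^ 2 * Real.log t) ν := h2.sub (h1.mul_const _)
      have A2 : Integrable (fun ω => f ω ^ 2 * Real.log (f ω ^ 2)
          - f ω ^ 2 * Real.log t + t) ν := A1.add (integrable_const t)
      rw [hφdef]
      rw [integral_sub A2 h1, integral_add A1 (integrable_const t),
        integral_sub h2 (h1.mul_const _), integral_mul_const, integral_const]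
      simp
    have hμφ : ∫ ω, φ ω ∂μ ≤ c * ∫ ω, Γ ω ∂μ := by
      rw [hsplit μ inferInstance hf1 hf2, ← htdef]
      linarith
    have hμtφ := hsplit μt hprob hf1' hf2'
    -- entropy bound under μt
    set s := ∫ ω, f ω ^ 2 ∂μt with hsdef
    have hs0 : 0 ≤ s := integral_nonneg fun ω => sq_nonneg _
    have hvar : (∫ ω, f ω ^ 2 * Real.log (f ω ^ 2) ∂μt) - s * Real.log s
        ≤ ∫ ω, φ ω ∂μt := by
      have := aux_nonneg hs0 ht
      rw [hμtφ]
      linarith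
    have hchain1 : ∫ ω, φ ω ∂μt ≤ (Real.exp M / Z) * ∫ ω, φ ω ∂μ := keyA φ hφpos hφint
    have hΓt0 : 0 ≤ ∫ ω, Γ ω ∂μt := integral_nonneg fun ω => hΓ ω
    have hchain2 : (Real.exp M / Z) * ∫ ω, φ ω ∂μ
        ≤ (Real.exp M / Z) * (c * ((Z / Real.exp m) * ∫ ω, Γ ω ∂μt)) := by
      have h3 : c * ∫ ω, Γ ω ∂μ ≤ c * ((Z / Real.exp m) * ∫ ω, Γ ω ∂μt) :=
        mul_le_mul_of_nonneg_left keyB hc.le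
      have h4 : ∫ ω, φ ω ∂μ ≤ c * ((Z / Real.exp m) * ∫ ω, Γ ω ∂μt) :=
        le_trans hμφ h3
      exact mul_le_mul_of_nonneg_left h4 (by positivity)
    have hfinal : (Real.exp M / Z) * (c * ((Z / Real.exp m) * ∫ ω, Γ ω ∂μt))
        = c * Real.exp (M - m) * ∫ ω, Γ ω ∂μt := by
      rw [Real.exp_sub]
      field_simp
    calc (∫ ω, f ω ^ 2 * Real.log (f ω ^ 2) ∂μt) - s * Real.log s
        ≤ ∫ ω, φ ω ∂μt := hvar
      _ ≤ (Real.exp M / Z) * ∫ ω, φ ω ∂μ := hchain1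
      _ ≤ (Real.exp M / Z) * (c * ((Z / Real.exp m) * ∫ ω, Γ ω ∂μt)) := hchain2
      _ = c * Real.exp (M - m) * ∫ ω, Γ ω ∂μt := hfinal
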